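/- The expansion of the n-th power of the first power-sum symmetric function p_1 in the basis of Schur functions is p_1^n = Σ_{λ ⊢ n} f^λ · s_λ, where f^λ is the number of standard Young tableaux of shape λ. -/

import Mathlib

/-- The type of standard Young tableaux of shape `μ`. -/
def SYT (μ : YoungDiagram) : Type :=
  {f : μ.cells → Fin μ.card //
    Function.Bijective f ∧
    ∀ a b : μ.cells, (a : ℕ × ℕ).1 ≤ (b : ℕ × ℕ).1 → (a : ℕ × ℕ).2 ≤ (b : ℕ × ℕ).2 →
      a ≠ b → f a < f b}

/-- The number of standard Young tableaux of shape `μ`. -/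
noncomputable def sytCount (μ : YoungDiagram) : ℕ := Nat.card (SYT μ)

/-- The bialternant `a_{λ+δ} = det (x_i^{λ_j + N - 1 - j})` in `N` variables;
for `λ = ∅` this is the Vandermonde determinant `a_δ`. -/
noncomputable def bialternant (N : ℕ) (μ : YoungDiagram) : MvPolynomial (Fin N) ℚ :=
  Matrix.det (Matrix.of fun i j : Fin N => MvPolynomial.X i ^ (μ.rowLen j + (N - 1 - (j : ℕ))))



open MvPolynomial

noncomputable def D (N : ℕ) (e : Fin N → ℕ) : MvPolynomial (Fin N) ℚ :=
  Matrix.det (Matrix.of fun i j : Fin N => MvPolynomial.X i ^ (e j))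

lemma D_eq_zero {N : ℕ} {e : Fin N → ℕ} {j j' : Fin N} (hjj : j ≠ j') (h : e j = e j') :
    D N e = 0 :=
  Matrix.det_zero_of_column_eq hjj (fun k => by simp [h])

lemma lemA (N : ℕ) (e : Fin N → ℕ) :
    (∑ i : Fin N, MvPolynomial.X i : MvPolynomial (Fin N) ℚ) * D N e =
      ∑ j : Fin N, D N (Function.update e j (e j + 1)) := by
  unfold D
  simp only [Matrix.det_apply]
  rw [Finset.sum_comm]
  rw [Finset.mul_sum]
  refine Finset.sum_congr rfl fun σ _ => ?_
  rw [mul_smul_comm, ← Finset.smul_sum]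
  congr 1
  have key2 : ∀ j : Fin N, (∏ i : Fin N, (Matrix.of fun i j' : Fin N =>
      (MvPolynomial.X i : MvPolynomial (Fin N) ℚ) ^ (Function.update e j (e j + 1) j')) (σ i) i)
      = MvPolynomial.X (σ j) * ∏ i : Fin N, MvPolynomial.X (σ i) ^ e i := by
    intro j
    simp only [Matrix.of_apply]
    have hprod : (∏ i ∈ Finset.univ.erase j,
        (MvPolynomial.X (σ i) : MvPolynomial (Fin N) ℚ) ^ (Function.update e j (e j + 1) i))
        = ∏ i ∈ Finset.univ.erase j, (MvPolynomial.X (σ i) : MvPolynomial (Fin N) ℚ) ^ e i :=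
      Finset.prod_congr rfl fun i hi => by
        rw [Function.update_of_ne (Finset.ne_of_mem_erase hi)]
    rw [← Finset.mul_prod_erase Finset.univ _ (Finset.mem_univ j),
      ← Finset.mul_prod_erase Finset.univ (fun i => MvPolynomial.X (σ i) ^ e i) (Finset.mem_univ j),
      Function.update_self, hprod, pow_succ, mul_comm _ (MvPolynomial.X (σ j)), mul_assoc]
  rw [Finset.sum_congr rfl fun j _ => key2 j, ← Finset.sum_mul,
    Equiv.sum_comp σ (fun k => (MvPolynomial.X k : MvPolynomial (Fin N) ℚ))]
  rfl


namespace YD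

/-- One can add a box at the end of row `i` iff all cells directly above the new
cell `(i, μ.rowLen i)` are present. -/
def Addable (μ : YoungDiagram) (i : ℕ) : Prop := ∀ a, a < i → (a, μ.rowLen i) ∈ μ

lemma addable_iff {μ : YoungDiagram} {i : ℕ} :
    Addable μ i ↔ (i = 0 ∨ μ.rowLen i < μ.rowLen (i - 1)) := by
  constructor
  · intro h
    rcases Nat.eq_zero_or_pos i with h0 | h0
    · exact Or.inl h0
    · exact Or.inr (YoungDiagram.mem_iff_lt_rowLen.mp (h _ (Nat.sub_lt h0 one_pos)))
  · rintro (rfl | h) a ha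
    · omega
    · exact YoungDiagram.mem_iff_lt_rowLen.mpr
        (lt_of_lt_of_le h (μ.rowLen_anti a (i-1) (by omega)))

def addBox (μ : YoungDiagram) (i : ℕ) (h : Addable μ i) : YoungDiagram where
  cells := insert (i, μ.rowLen i) μ.cells
  isLowerSet := by
    rintro ⟨a, b⟩ ⟨c, d⟩ ⟨hac, hbd⟩ hm
    simp only [Finset.coe_insert, Set.mem_insert_iff, YoungDiagram.mem_cells,
      Prod.mk.injEq] at hm ⊢
    simp only [Finset.mem_coe, YoungDiagram.mem_cells] at hm ⊢
    rcases hm with ⟨rfl, rfl⟩ | hm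
    · simp only at hac hbd
      rcases lt_or_eq_of_le hbd with hb | rfl
      · exact Or.inr (μ.up_left_mem hac (le_refl d) (YoungDiagram.mem_iff_lt_rowLen.mpr hb))
      · rcases lt_or_eq_of_le hac with ha | rfl
        · exact Or.inr (μ.up_left_mem (le_refl c) (le_refl _) (h c ha))
        · exact Or.inl ⟨rfl, rfl⟩
    · exact Or.inr (μ.up_left_mem hac hbd hm)

lemma cells_addBox {μ : YoungDiagram} {i : ℕ} (h : Addable μ i) :
    (addBox μ i h).cells = insert (i, μ.rowLen i) μ.cells := rfl

lemma mem_addBox {μ : YoungDiagram} {i : ℕ} {h : Addable μ i} {c : ℕ × ℕ} :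
    c ∈ addBox μ i h ↔ c = (i, μ.rowLen i) ∨ c ∈ μ := by
  rw [← YoungDiagram.mem_cells, cells_addBox, Finset.mem_insert, YoungDiagram.mem_cells]

lemma new_not_mem {μ : YoungDiagram} {i : ℕ} : (i, μ.rowLen i) ∉ μ := by
  rw [YoungDiagram.mem_iff_lt_rowLen]; omega

lemma card_addBox {μ : YoungDiagram} {i : ℕ} (h : Addable μ i) :
    (addBox μ i h).card = μ.card + 1 := by
  show (addBox μ i h).cells.card = μ.cells.card + 1
  rw [cells_addBox,
    Finset.card_insert_of_notMem (by simpa using new_not_mem (μ := μ) (i := i))]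

lemma le_addBox {μ : YoungDiagram} {i : ℕ} (h : Addable μ i) : μ ≤ addBox μ i h :=
  fun c hc => mem_addBox.mpr (Or.inr hc)

lemma rowLen_eq {ν : YoungDiagram} {k m : ℕ} (h : ∀ j, (k, j) ∈ ν ↔ j < m) :
    ν.rowLen k = m := by
  have h1 := (h (ν.rowLen k)).symm.trans YoungDiagram.mem_iff_lt_rowLen
  have h2 := (h m).symm.trans YoungDiagram.mem_iff_lt_rowLen
  omega

lemma rowLen_addBox {μ : YoungDiagram} {i : ℕ} (h : Addable μ i) (k : ℕ) :
    (addBox μ i h).rowLen k = if k = i then μ.rowLen i + 1 else μ.rowLen k := by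
  apply rowLen_eq
  intro j
  rw [mem_addBox, YoungDiagram.mem_iff_lt_rowLen, Prod.ext_iff]
  split <;> rename_i hk
  · subst hk; simp only [true_and]; omega
  · simp only [hk, false_and, false_or]

lemma colLen_addBox_le {μ : YoungDiagram} {i N : ℕ} (h : Addable μ i) (hiN : i < N)
    (hμ : μ.colLen 0 ≤ N) : (addBox μ i h).colLen 0 ≤ N := by
  by_contra hc
  push_neg at hc
  have hm : (N, 0) ∈ addBox μ i h := YoungDiagram.mem_iff_lt_colLen.mpr hc
  rw [mem_addBox] at hm
  rcases hm with hh | hh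
  · exact absurd (Prod.ext_iff.mp hh).1 (by omega)
  · exact absurd (YoungDiagram.mem_iff_lt_colLen.mp hh) (by omega)

/-- Classification of covers. -/
lemma cover_eq_addBox {μ ν : YoungDiagram} (hle : μ ≤ ν) (hcard : ν.card = μ.card + 1) :
    ∃ i, ∃ h : Addable μ i, ν = addBox μ i h := by
  have hle' : μ.cells ⊆ ν.cells := YoungDiagram.cells_subset_iff.mpr hle
  have hne : μ.cells ≠ ν.cells := fun he => by
    have h2 : μ.cells.card = ν.cells.card := by rw [he]
    rw [YoungDiagram.card, YoungDiagram.card] at hcard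
    omega
  obtain ⟨c, hcν, hcμ⟩ := Finset.exists_of_ssubset (Finset.ssubset_iff_subset_ne.mpr ⟨hle', hne⟩)
  have hcells : ν.cells = insert c μ.cells := by
    apply (Finset.eq_of_subset_of_card_le ?_ ?_).symm
    · intro x hx
      rcases Finset.mem_insert.mp hx with rfl | hx
      · exact hcν
      · exact hle' hx
    · rw [Finset.card_insert_of_notMem hcμ]
      rw [YoungDiagram.card, YoungDiagram.card] at hcard
      omega
  obtain ⟨i, j⟩ := c
  have hmemν : ∀ x : ℕ × ℕ, x ∈ ν ↔ x = (i, j) ∨ x ∈ μ := by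
    intro x
    rw [← YoungDiagram.mem_cells, hcells, Finset.mem_insert, YoungDiagram.mem_cells]
  rw [YoungDiagram.mem_cells] at hcν hcμ
  have hrow : μ.rowLen i = j := by
    apply rowLen_eq
    intro j'
    constructor
    · intro hm
      by_contra hge
      push_neg at hge
      exact hcμ (μ.up_left_mem (le_refl i) hge hm)
    · intro hj'
      have hν : (i, j') ∈ ν := ν.up_left_mem (le_refl i) (le_of_lt hj') hcν
      rcases (hmemν _).mp hν with he | hm
      · exact absurd (Prod.ext_iff.mp he).2 (by omega)
      · exact hm
  have haddable : Addable μ i := by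
    intro a ha
    rw [hrow]
    have hν : (a, j) ∈ ν := ν.up_left_mem (le_of_lt ha) (le_refl j) hcν
    rcases (hmemν _).mp hν with he | hm
    · exact absurd (Prod.ext_iff.mp he).1 (by omega)
    · exact hm
  refine ⟨i, haddable, ?_⟩
  apply YoungDiagram.ext
  rw [cells_addBox, hrow, hcells]

lemma addBox_inj {μ : YoungDiagram} {i i' : ℕ} {h : Addable μ i} {h' : Addable μ i'}
    (he : addBox μ i h = addBox μ i' h') : i = i' := by
  by_contra hne
  have h1 : (i, μ.rowLen i) ∈ addBox μ i' h' := he ▸ mem_addBox.mpr (Or.inl rfl)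
  rw [mem_addBox] at h1
  rcases h1 with hh | hh
  · exact hne (Prod.ext_iff.mp hh).1
  · exact new_not_mem hh

end YD

instance (μ : YoungDiagram) : Finite (SYT μ) := by
  unfold SYT
  infer_instance

lemma mem_bound {μ : YoungDiagram} {c : ℕ × ℕ} (hc : c ∈ μ) :
    c.1 < μ.card ∧ c.2 < μ.card := by
  obtain ⟨i, j⟩ := c
  have h1 : i < μ.colLen j := YoungDiagram.mem_iff_lt_colLen.mp hc
  have h2 : j < μ.rowLen i := YoungDiagram.mem_iff_lt_rowLen.mp hc
  have h3 : μ.colLen j ≤ μ.card := by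
    rw [YoungDiagram.colLen_eq_card]
    exact Finset.card_le_card (fun x hx => (YoungDiagram.mem_cells _).mpr
      (YoungDiagram.mem_col_iff.mp hx).1)
  have h4 : μ.rowLen i ≤ μ.card := by
    rw [YoungDiagram.rowLen_eq_card]
    exact Finset.card_le_card (fun x hx => (YoungDiagram.mem_cells _).mpr
      (YoungDiagram.mem_row_iff.mp hx).1)
  exact ⟨by omega, by omega⟩

instance cardFinite (n : ℕ) : Finite {μ : YoungDiagram // μ.card = n} := by
  have : ∀ μ : {μ : YoungDiagram // μ.card = n},
      μ.1.cells ∈ (Finset.range n ×ˢ Finset.range n).powerset := by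
    rintro ⟨μ, hμ⟩
    rw [Finset.mem_powerset]
    intro c hc
    rw [YoungDiagram.mem_cells] at hc
    obtain ⟨h1, h2⟩ := mem_bound hc
    rw [hμ] at h1 h2
    exact Finset.mem_product.mpr ⟨Finset.mem_range.mpr h1, Finset.mem_range.mpr h2⟩
  apply Finite.of_injective (fun μ => (⟨μ.1.cells, this μ⟩ :
    ((Finset.range n ×ˢ Finset.range n).powerset : Finset (Finset (ℕ × ℕ)))))
  rintro ⟨μ, hμ⟩ ⟨ν, hν⟩ h
  simp only [Subtype.mk.injEq] at h ⊢
  exact YoungDiagram.ext h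

instance subFinite (n N : ℕ) : Finite {μ : YoungDiagram // μ.card = n ∧ μ.colLen 0 ≤ N} := by
  apply Finite.of_injective (fun μ => (⟨μ.1, μ.2.1⟩ : {μ : YoungDiagram // μ.card = n}))
  rintro ⟨a, ha⟩ ⟨b, hb⟩ h
  simpa using congrArg Subtype.val h

instance covFinite (ν : YoungDiagram) (n : ℕ) :
    Finite {μ : YoungDiagram // μ ≤ ν ∧ μ.card = n} := by
  apply Finite.of_injective (fun μ => (⟨μ.1, μ.2.2⟩ : {μ : YoungDiagram // μ.card = n}))
  rintro ⟨a, ha⟩ ⟨b, hb⟩ h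
  simpa using congrArg Subtype.val h

open YD

namespace SYTrec

variable {ν μ : YoungDiagram} {n : ℕ}

lemma exists_corner (hle : μ ≤ ν) (hcard : ν.card = μ.card + 1) :
    ∃ c : ℕ × ℕ, c ∉ μ ∧ ∀ x, x ∈ ν ↔ x = c ∨ x ∈ μ := by
  obtain ⟨i, h, rfl⟩ := YD.cover_eq_addBox hle hcard
  exact ⟨(i, μ.rowLen i), YD.new_not_mem, fun x => YD.mem_addBox⟩

lemma corner_unique {c c' : ℕ × ℕ} (hc1 : c ∉ μ) (hc2 : ∀ x, x ∈ ν ↔ x = c ∨ x ∈ μ)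
    (hc1' : c' ∉ μ) (hc2' : ∀ x, x ∈ ν ↔ x = c' ∨ x ∈ μ) : c = c' := by
  rcases (hc2' c).mp ((hc2 c).mpr (Or.inl rfl)) with h | h
  · exact h
  · exact absurd h hc1

lemma mem_erase_of_ne {c : ℕ × ℕ} (hc2 : ∀ x, x ∈ ν ↔ x = c ∨ x ∈ μ) {b : ℕ × ℕ}
    (hb : b ∈ ν.cells) (hbc : b ≠ c) : b ∈ μ.cells := by
  rcases (hc2 b).mp ((YoungDiagram.mem_cells _).mp hb) with h' | h'
  exacts [absurd h' hbc, (YoungDiagram.mem_cells _).mpr h']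

/-- Extend a SYT of `μ` to a SYT of `ν`, where `ν = μ ∪ {c}`. -/
noncomputable def Psi (hν : ν.card = n + 1) (hle : μ ≤ ν) (hcard : μ.card = n)
    {c : ℕ × ℕ} (hc1 : c ∉ μ) (hc2 : ∀ x, x ∈ ν ↔ x = c ∨ x ∈ μ) (g : SYT μ) : SYT ν := by
  classical
  refine ⟨fun x => if h : x.1 = c then ⟨n, by omega⟩ else
    Fin.castLE (by omega) (g.1 ⟨x.1, mem_erase_of_ne hc2 x.2 h⟩), ?_, ?_⟩
  · constructor
    · -- injective
      rintro ⟨a, ha⟩ ⟨b, hb⟩ hab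
      beta_reduce at hab
      by_cases h1 : a = c <;> by_cases h2 : b = c
      · exact Subtype.ext (h1.trans h2.symm)
      · exfalso
        rw [dif_pos h1, dif_neg h2, Fin.ext_iff] at hab
        simp only [Fin.coe_castLE] at hab
        have hlt := (g.1 ⟨b, mem_erase_of_ne hc2 hb h2⟩).isLt
        omega
      · exfalso
        rw [dif_neg h1, dif_pos h2, Fin.ext_iff] at hab
        simp only [Fin.coe_castLE] at hab
        have hlt := (g.1 ⟨a, mem_erase_of_ne hc2 ha h1⟩).isLt
        omega
      · rw [dif_neg h1, dif_neg h2, Fin.ext_iff] at hab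
        simp only [Fin.coe_castLE] at hab
        have := g.2.1.1 (Fin.ext hab)
        exact Subtype.ext (show a = b from Subtype.ext_iff.mp this)
    · -- surjective
      rintro ⟨y, hy⟩
      by_cases hyn : y = n
      · refine ⟨⟨c, (YoungDiagram.mem_cells _).mpr ((hc2 c).mpr (Or.inl rfl))⟩, ?_⟩
        beta_reduce
        rw [dif_pos rfl]
        exact Fin.ext hyn.symm
      · have hy' : y < μ.card := by omega
        obtain ⟨x, hx⟩ := g.2.1.2 ⟨y, hy'⟩
        have hxν : x.1 ∈ ν.cells := (YoungDiagram.mem_cells _).mpr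
          ((hc2 x.1).mpr (Or.inr ((YoungDiagram.mem_cells _).mp x.2)))
        refine ⟨⟨x.1, hxν⟩, ?_⟩
        have hxc : x.1 ≠ c := fun he => hc1 (he ▸ (YoungDiagram.mem_cells _).mp x.2)
        beta_reduce
        rw [dif_neg hxc]
        apply Fin.ext
        rw [Fin.coe_castLE]
        have hre : (⟨x.1, mem_erase_of_ne hc2 hxν hxc⟩ : {z // z ∈ μ.cells}) = x :=
          Subtype.ext rfl
        rw [hre, hx]
  · -- monotone
    rintro ⟨a, ha⟩ ⟨b, hb⟩ h1 h2 hne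
    simp only at h1 h2
    beta_reduce
    by_cases hbc : b = c
    · have hac : a ≠ c := fun he => hne (Subtype.ext (he.trans hbc.symm))
      rw [dif_pos hbc, dif_neg hac, Fin.lt_def]
      simp only [Fin.coe_castLE]
      have hlt := (g.1 ⟨a, mem_erase_of_ne hc2 ha hac⟩).isLt
      omega
    · have hbμ : b ∈ μ := (YoungDiagram.mem_cells _).mp (mem_erase_of_ne hc2 hb hbc)
      have hac : a ≠ c := by
        rintro rfl
        exact hc1 (μ.up_left_mem h1 h2 hbμ)
      rw [dif_neg hac, dif_neg hbc, Fin.lt_def]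
      simp only [Fin.coe_castLE]
      have := g.2.2 ⟨a, mem_erase_of_ne hc2 ha hac⟩ ⟨b, mem_erase_of_ne hc2 hb hbc⟩ h1 h2
        (fun he => hne (Subtype.ext (show a = b from Subtype.ext_iff.mp he)))
      exact this

lemma Psi_val (hν : ν.card = n + 1) (hle : μ ≤ ν) (hcard : μ.card = n)
    {c : ℕ × ℕ} (hc1 : c ∉ μ) (hc2 : ∀ x, x ∈ ν ↔ x = c ∨ x ∈ μ) (g : SYT μ)
    (x : ν.cells) (hx : x.1 ≠ c) :
    ((Psi hν hle hcard hc1 hc2 g).1 x).val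
      = (g.1 ⟨x.1, mem_erase_of_ne hc2 x.2 hx⟩).val := by
  show ((dite _ _ _ : Fin ν.card)).val = _
  rw [dif_neg hx, Fin.coe_castLE]

lemma Psi_val_c (hν : ν.card = n + 1) (hle : μ ≤ ν) (hcard : μ.card = n)
    {c : ℕ × ℕ} (hc1 : c ∉ μ) (hc2 : ∀ x, x ∈ ν ↔ x = c ∨ x ∈ μ) (g : SYT μ)
    (x : ν.cells) (hx : x.1 = c) :
    ((Psi hν hle hcard hc1 hc2 g).1 x).val = n := by
  show ((dite _ _ _ : Fin ν.card)).val = _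
  rw [dif_pos hx]



lemma mem_iff_Psi_val_ne (hν : ν.card = n + 1) (hle : μ ≤ ν) (hcard : μ.card = n)
    {c : ℕ × ℕ} (hc1 : c ∉ μ) (hc2 : ∀ x, x ∈ ν ↔ x = c ∨ x ∈ μ) (g : SYT μ)
    (x : ℕ × ℕ) :
    x ∈ μ ↔ ∃ hx : x ∈ ν.cells, ((Psi hν hle hcard hc1 hc2 g).1 ⟨x, hx⟩).val ≠ n := by
  constructor
  · intro hxμ
    have hxν : x ∈ ν.cells := (YoungDiagram.mem_cells _).mpr ((hc2 x).mpr (Or.inr hxμ))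
    refine ⟨hxν, ?_⟩
    have hxc : x ≠ c := fun he => hc1 (he ▸ hxμ)
    rw [Psi_val hν hle hcard hc1 hc2 g ⟨x, hxν⟩ hxc]
    have := (g.1 ⟨x, mem_erase_of_ne hc2 hxν hxc⟩).isLt
    omega
  · rintro ⟨hx, hne⟩
    by_cases hxc : x = c
    · exact absurd (Psi_val_c hν hle hcard hc1 hc2 g ⟨x, hx⟩ hxc) hne
    · exact (YoungDiagram.mem_cells _).mp (mem_erase_of_ne hc2 hx hxc)

lemma sytCount_rec (ν : YoungDiagram) (n : ℕ) (hν : ν.card = n + 1) :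
    sytCount ν = Nat.card (Σ μ : {μ : YoungDiagram // μ ≤ ν ∧ μ.card = n}, SYT μ.1) := by
  classical
  have hex : ∀ μ : {μ : YoungDiagram // μ ≤ ν ∧ μ.card = n},
      ∃ c : ℕ × ℕ, c ∉ μ.1 ∧ ∀ x, x ∈ ν ↔ x = c ∨ x ∈ μ.1 :=
    fun μ => exists_corner μ.2.1 (by rw [μ.2.2, hν])
  set F : (Σ μ : {μ : YoungDiagram // μ ≤ ν ∧ μ.card = n}, SYT μ.1) → SYT ν :=
    fun t => Psi hν t.1.2.1 t.1.2.2 (Classical.choose_spec (hex t.1)).1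
      (Classical.choose_spec (hex t.1)).2 t.2 with hF
  have Finj : Function.Injective F := by
    rintro ⟨⟨μ1, hle1, hcd1⟩, g1⟩ ⟨⟨μ2, hle2, hcd2⟩, g2⟩ h
    simp only [hF] at h
    obtain ⟨hcn1, hcd1'⟩ := Classical.choose_spec (hex ⟨μ1, hle1, hcd1⟩)
    obtain ⟨hcn2, hcd2'⟩ := Classical.choose_spec (hex ⟨μ2, hle2, hcd2⟩)
    have hfun := congrArg Subtype.val h
    have hμ : μ1 = μ2 := by
      apply YoungDiagram.ext
      ext x
      rw [YoungDiagram.mem_cells, YoungDiagram.mem_cells]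
      rw [mem_iff_Psi_val_ne hν hle1 hcd1 hcn1 hcd1' g1 x,
        mem_iff_Psi_val_ne hν hle2 hcd2 hcn2 hcd2' g2 x]
      constructor
      · rintro ⟨hx, hne⟩
        exact ⟨hx, by rw [← congrFun hfun ⟨x, hx⟩]; exact hne⟩
      · rintro ⟨hx, hne⟩
        exact ⟨hx, by rw [congrFun hfun ⟨x, hx⟩]; exact hne⟩
    subst hμ
    have hcc : Classical.choose (hex ⟨μ1, hle1, hcd1⟩)
        = Classical.choose (hex ⟨μ1, hle2, hcd2⟩) :=
      corner_unique hcn1 hcd1' hcn2 hcd2'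
    have hgg : g1 = g2 := by
      apply Subtype.ext
      funext x
      apply Fin.ext
      have hx1 : x.1 ≠ Classical.choose (hex ⟨μ1, hle1, hcd1⟩) :=
        fun he => hcn1 (he ▸ (YoungDiagram.mem_cells _).mp x.2)
      have hx2 : x.1 ≠ Classical.choose (hex ⟨μ1, hle2, hcd2⟩) := by rw [← hcc]; exact hx1
      have hxν : x.1 ∈ ν.cells := (YoungDiagram.mem_cells _).mpr
        ((hcd1' x.1).mpr (Or.inr ((YoungDiagram.mem_cells _).mp x.2)))
      have e1 := Psi_val hν hle1 hcd1 hcn1 hcd1' g1 ⟨x.1, hxν⟩ hx1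
      have e2 := Psi_val hν hle2 hcd2 hcn2 hcd2' g2 ⟨x.1, hxν⟩ hx2
      have hre : ∀ (pf : x.1 ∈ μ1.cells), (⟨x.1, pf⟩ : {z // z ∈ μ1.cells}) = x :=
        fun pf => Subtype.ext rfl
      rw [hre] at e1 e2
      rw [← e1, ← e2, congrFun hfun ⟨x.1, hxν⟩]
    subst hgg
    rfl
  have Fsurj : Function.Surjective F := by
    rintro ⟨f, fbij, fmono⟩
    set lastI : Fin ν.card := ⟨n, by omega⟩ with hlastI
    set c : {z // z ∈ ν.cells} := (Equiv.ofBijective f fbij).symm lastI with hcdef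
    have hfc : f c = lastI := (Equiv.ofBijective f fbij).apply_symm_apply lastI
    have hmax : ∀ x : ℕ × ℕ, x ∈ ν → (c.1).1 ≤ x.1 → (c.1).2 ≤ x.2 → x = c.1 := by
      intro x hx h1 h2
      by_contra hne
      have hlt := fmono c ⟨x, (YoungDiagram.mem_cells _).mpr hx⟩ h1 h2
        (fun he => hne (congrArg Subtype.val he).symm)
      rw [hfc, Fin.lt_def] at hlt
      have := (f ⟨x, (YoungDiagram.mem_cells _).mpr hx⟩).isLt
      simp only [hlastI] at hlt
      omega
    have hlower : IsLowerSet (↑(ν.cells.erase c.1) : Set (ℕ × ℕ)) := by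
      rintro ⟨x1, x2⟩ ⟨y1, y2⟩ ⟨hy1, hy2⟩ hx
      simp only [Finset.coe_erase, Set.mem_diff, Finset.mem_coe,
        Set.mem_singleton_iff] at hx ⊢
      obtain ⟨hxν, hxc⟩ := hx
      rw [YoungDiagram.mem_cells] at hxν
      refine ⟨(YoungDiagram.mem_cells _).mpr (ν.up_left_mem hy1 hy2 hxν), ?_⟩
      intro he
      apply hxc
      apply hmax _ hxν
      · rw [← he]; exact hy1
      · rw [← he]; exact hy2
    set μ0 : YoungDiagram := ⟨ν.cells.erase c.1, hlower⟩ with hμ0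
    have hcells0 : μ0.cells = ν.cells.erase c.1 := rfl
    have hle0 : μ0 ≤ ν := by
      intro x hx
      exact (YoungDiagram.mem_cells _).mp (Finset.mem_of_mem_erase hx)
    have hcard0 : μ0.card = n := by
      show (ν.cells.erase c.1).card = n
      rw [Finset.card_erase_of_mem c.2]
      rw [YoungDiagram.card] at hν
      omega
    have hc2' : ∀ x, x ∈ ν ↔ x = c.1 ∨ x ∈ μ0 := by
      intro x
      rw [← YoungDiagram.mem_cells (μ := μ0), hcells0, Finset.mem_erase]
      constructor
      · intro hx
        by_cases hxc : x = c.1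
        · exact Or.inl hxc
        · exact Or.inr ⟨hxc, (YoungDiagram.mem_cells _).mpr hx⟩
      · rintro (rfl | ⟨_, hx⟩)
        · exact (YoungDiagram.mem_cells _).mp c.2
        · exact (YoungDiagram.mem_cells _).mp hx
    have hc1' : c.1 ∉ μ0 := by
      rw [← YoungDiagram.mem_cells (μ := μ0), hcells0]
      exact Finset.notMem_erase _ _
    have hgmem : ∀ x : {z // z ∈ μ0.cells}, x.1 ∈ ν.cells :=
      fun x => Finset.mem_of_mem_erase x.2
    have hgne : ∀ x : {z // z ∈ μ0.cells}, (f ⟨x.1, hgmem x⟩).val ≠ n := by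
      intro x hv
      have h1 : f ⟨x.1, hgmem x⟩ = lastI := Fin.ext hv
      have hxe := fbij.1 (h1.trans hfc.symm)
      exact (Finset.ne_of_mem_erase x.2) (congrArg Subtype.val hxe)
    have hglt : ∀ x : {z // z ∈ μ0.cells}, (f ⟨x.1, hgmem x⟩).val < μ0.card := by
      intro x
      have h1 := (f ⟨x.1, hgmem x⟩).isLt
      have h2 := hgne x
      omega
    set g0 : {z // z ∈ μ0.cells} → Fin μ0.card :=
      fun x => ⟨(f ⟨x.1, hgmem x⟩).val, hglt x⟩ with hg0
    have g0inj : Function.Injective g0 := by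
      intro a b hab
      have h0 : (g0 a).val = (g0 b).val := congrArg Fin.val hab
      have h1 : f ⟨a.1, hgmem a⟩ = f ⟨b.1, hgmem b⟩ :=
        Fin.ext (show (f ⟨a.1, hgmem a⟩).val = (f ⟨b.1, hgmem b⟩).val from h0)
      exact Subtype.ext (congrArg (fun z : {z // z ∈ ν.cells} => z.1) (fbij.1 h1))
    have g0surj : Function.Surjective g0 := by
      rintro ⟨y, hy⟩
      obtain ⟨x, hx⟩ := fbij.2 ⟨y, by omega⟩
      have hxc : x.1 ≠ c.1 := by
        intro he
        have : x = c := Subtype.ext he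
        rw [this, hfc] at hx
        have : n = y := congrArg Fin.val hx
        omega
      refine ⟨⟨x.1, Finset.mem_erase.mpr ⟨hxc, x.2⟩⟩, ?_⟩
      apply Fin.ext
      show (f ⟨x.1, _⟩).val = y
      have hre : (⟨x.1, hgmem ⟨x.1, Finset.mem_erase.mpr ⟨hxc, x.2⟩⟩⟩ : {z // z ∈ ν.cells}) = x :=
        Subtype.ext rfl
      rw [hre, hx]
    have g0mono : ∀ a b : {z // z ∈ μ0.cells},
        (a : ℕ × ℕ).1 ≤ (b : ℕ × ℕ).1 → (a : ℕ × ℕ).2 ≤ (b : ℕ × ℕ).2 → a ≠ b →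
        g0 a < g0 b := by
      intro a b h1 h2 hne
      rw [Fin.lt_def]
      show (f ⟨a.1, hgmem a⟩).val < (f ⟨b.1, hgmem b⟩).val
      rw [← Fin.lt_def]
      exact fmono ⟨a.1, hgmem a⟩ ⟨b.1, hgmem b⟩ h1 h2
        (fun he => hne (Subtype.ext (congrArg (fun z : {z // z ∈ ν.cells} => z.1) he)))
    refine ⟨⟨⟨μ0, hle0, hcard0⟩, ⟨g0, ⟨g0inj, g0surj⟩, g0mono⟩⟩, ?_⟩
    apply Subtype.ext
    funext x
    apply Fin.ext
    simp only [hF]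
    obtain ⟨hcs1, hcs2⟩ := Classical.choose_spec (hex ⟨μ0, hle0, hcard0⟩)
    have hcc : Classical.choose (hex ⟨μ0, hle0, hcard0⟩) = c.1 :=
      corner_unique hcs1 hcs2 hc1' hc2'
    by_cases hxc : x.1 = c.1
    · refine (Psi_val_c hν hle0 hcard0 hcs1 hcs2 _ x (by rw [hcc]; exact hxc)).trans ?_
      have : x = c := Subtype.ext hxc
      rw [this, hfc]
    · exact Psi_val hν hle0 hcard0 hcs1 hcs2 _ x (by rw [hcc]; exact hxc)
  unfold sytCount
  exact le_antisymm (Nat.card_le_card_of_surjective F Fsurj)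
    (Nat.card_le_card_of_injective F Finj)

end SYTrec


section Step

open YD
open scoped Classical

lemma colLen_mono {μ ν : YoungDiagram} (h : μ ≤ ν) (j : ℕ) : μ.colLen j ≤ ν.colLen j := by
  by_contra hc
  push_neg at hc
  have h1 : (ν.colLen j, j) ∈ μ := YoungDiagram.mem_iff_lt_colLen.mpr hc
  have h2 := YoungDiagram.mem_iff_lt_colLen.mp (h h1)
  omega

lemma bialternant_eq_D (N : ℕ) (μ : YoungDiagram) :
    bialternant N μ = D N (fun j : Fin N => μ.rowLen j + (N - 1 - (j : ℕ))) := rfl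

lemma step (N : ℕ) (μ : YoungDiagram) :
    (∑ i : Fin N, MvPolynomial.X i : MvPolynomial (Fin N) ℚ) * bialternant N μ =
      ∑ j : Fin N,
        if h : Addable μ (j : ℕ) then bialternant N (addBox μ (j : ℕ) h) else 0 := by
  classical
  rw [bialternant_eq_D, lemA]
  refine Finset.sum_congr rfl fun j _ => ?_
  split <;> rename_i h
  · rw [bialternant_eq_D]
    congr 1
    funext k
    rw [Function.update_apply]
    have hrl := rowLen_addBox h (k : ℕ)
    by_cases hk : k = j
    · subst hk
      rw [if_pos rfl, hrl, if_pos rfl]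
      have := k.isLt
      omega
    · rw [if_neg hk, hrl, if_neg (fun hv => hk (Fin.ext hv))]
  · rw [addable_iff, not_or, not_lt] at h
    obtain ⟨hj0, hge⟩ := h
    have hle' : μ.rowLen (j : ℕ) ≤ μ.rowLen ((j : ℕ) - 1) :=
      μ.rowLen_anti _ _ (by omega)
    have heqr : μ.rowLen ((j : ℕ) - 1) = μ.rowLen (j : ℕ) := by omega
    have hj1 : (j : ℕ) - 1 < N := by have := j.isLt; omega
    apply D_eq_zero (j := j) (j' := ⟨(j : ℕ) - 1, hj1⟩)
    · intro he
      have := congrArg Fin.val he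
      simp only at this
      omega
    · rw [Function.update_self, Function.update_of_ne]
      · simp only
        rw [heqr]
        have := j.isLt
        omega
      · intro he
        have := congrArg Fin.val he
        simp only at this
        omega

noncomputable instance instPFin (N n : ℕ) :
    Fintype {μ : YoungDiagram // μ.card = n ∧ μ.colLen 0 ≤ N} := Fintype.ofFinite _

lemma stepP (N n : ℕ) (μ : YoungDiagram) (hcard : μ.card = n) (hcol : μ.colLen 0 ≤ N) :
    (∑ j : Fin N,
        if h : Addable μ (j : ℕ) then bialternant N (addBox μ (j : ℕ) h) else 0)
      = ∑ ν : {ν : YoungDiagram // ν.card = n + 1 ∧ ν.colLen 0 ≤ N},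
          if μ ≤ ν.1 then bialternant N ν.1 else 0 := by
  classical
  rw [← Finset.sum_filter]
  rw [← Finset.sum_filter_of_ne
    (p := fun j : Fin N => Addable μ (j : ℕ))
    (fun x _ hx => by by_contra hp; rw [dif_neg hp] at hx; exact hx rfl)]
  refine Finset.sum_bij (fun j hj => ⟨addBox μ (j : ℕ)
      (Finset.mem_filter.mp hj).2,
      by rw [card_addBox (Finset.mem_filter.mp hj).2, hcard],
      colLen_addBox_le (Finset.mem_filter.mp hj).2 j.isLt hcol⟩) ?_ ?_ ?_ ?_
  · intro j hj
    rw [Finset.mem_filter]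
    exact ⟨Finset.mem_univ _, le_addBox (Finset.mem_filter.mp hj).2⟩
  · intro a ha b hb hab
    have := addBox_inj (h := (Finset.mem_filter.mp ha).2) (h' := (Finset.mem_filter.mp hb).2)
      (congrArg Subtype.val hab)
    exact Fin.ext this
  · rintro ⟨b, hb1, hb2⟩ hbt
    have hble : μ ≤ b := (Finset.mem_filter.mp hbt).2
    obtain ⟨i0, h0, heq⟩ := cover_eq_addBox hble (by rw [hb1, hcard])
    have hi0 : i0 < N := by
      have hm : (i0, 0) ∈ b := by
        rw [heq]
        exact (addBox μ i0 h0).up_left_mem (le_refl i0) (Nat.zero_le _)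
          (mem_addBox.mpr (Or.inl rfl))
      have := YoungDiagram.mem_iff_lt_colLen.mp hm
      omega
    refine ⟨⟨i0, hi0⟩, Finset.mem_filter.mpr ⟨Finset.mem_univ _, h0⟩, ?_⟩
    exact Subtype.ext heq.symm
  · intro j hj
    rw [dif_pos (Finset.mem_filter.mp hj).2]

lemma count_eq (N n : ℕ) (ν : YoungDiagram) (hν : ν.card = n + 1) (hcol : ν.colLen 0 ≤ N) :
    sytCount ν = ∑ μ : {μ : YoungDiagram // μ.card = n ∧ μ.colLen 0 ≤ N},
      if μ.1 ≤ ν then sytCount μ.1 else 0 := by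
  classical
  rw [SYTrec.sytCount_rec ν n hν]
  letI : Fintype {μ : YoungDiagram // μ ≤ ν ∧ μ.card = n} := Fintype.ofFinite _
  letI : ∀ μ : {μ : YoungDiagram // μ ≤ ν ∧ μ.card = n}, Fintype (SYT μ.1) :=
    fun μ => Fintype.ofFinite _
  rw [Nat.card_eq_fintype_card, Fintype.card_sigma, ← Finset.sum_filter]
  refine Finset.sum_bij (fun a _ => ⟨a.1, a.2.2, le_trans (colLen_mono a.2.1 0) hcol⟩)
    ?_ ?_ ?_ ?_
  · intro a _
    rw [Finset.mem_filter]
    exact ⟨Finset.mem_univ _, a.2.1⟩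
  · intro a _ b _ hab
    exact Subtype.ext (congrArg
      (fun z : {μ : YoungDiagram // μ.card = n ∧ μ.colLen 0 ≤ N} => z.1) hab)
  · intro b hb
    exact ⟨⟨b.1, (Finset.mem_filter.mp hb).2, b.2.1⟩, Finset.mem_univ _, Subtype.ext rfl⟩
  · intro a _
    simp only [sytCount]
    exact Nat.card_eq_fintype_card.symm

lemma card_bot : (⊥ : YoungDiagram).card = 0 := by
  rw [YoungDiagram.card, YoungDiagram.cells_bot]
  rfl

lemma colLen_bot (j : ℕ) : (⊥ : YoungDiagram).colLen j = 0 := by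
  by_contra hc
  exact YoungDiagram.notMem_bot _
    (YoungDiagram.mem_iff_lt_colLen.mpr (Nat.pos_of_ne_zero hc))

lemma sytCount_bot : sytCount ⊥ = 1 := by
  have hmem : ∀ x : ℕ × ℕ, x ∉ (⊥ : YoungDiagram).cells := by
    intro x
    rw [YoungDiagram.cells_bot]
    exact Finset.notMem_empty x
  unfold sytCount
  rw [Nat.card_eq_one_iff_unique]
  constructor
  · constructor
    intro f g
    apply Subtype.ext
    funext x
    exact absurd x.2 (hmem x.1)
  · refine ⟨⟨fun x => absurd x.2 (hmem x.1), ⟨fun a => absurd a.2 (hmem a.1),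
      fun y => Fin.elim0 (Fin.cast card_bot y)⟩,
      fun a => absurd a.2 (hmem a.1)⟩⟩

lemma main (N n : ℕ) :
    (∑ i : Fin N, MvPolynomial.X i : MvPolynomial (Fin N) ℚ) ^ n * bialternant N ⊥ =
      ∑ μ : {μ : YoungDiagram // μ.card = n ∧ μ.colLen 0 ≤ N},
        (sytCount μ.1 : MvPolynomial (Fin N) ℚ) * bialternant N μ.1 := by
  classical
  induction n with
  | zero =>
    rw [pow_zero, one_mul]
    rw [Fintype.sum_eq_single (⟨⊥, card_bot, by rw [colLen_bot]; exact Nat.zero_le N⟩ :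
      {μ : YoungDiagram // μ.card = 0 ∧ μ.colLen 0 ≤ N})]
    · rw [sytCount_bot, Nat.cast_one, one_mul]
    · intro b hb
      exfalso
      apply hb
      apply Subtype.ext
      apply YoungDiagram.ext
      rw [YoungDiagram.cells_bot, ← Finset.card_eq_zero]
      exact b.2.1
  | succ n ih =>
    have h1 : (∑ i : Fin N, MvPolynomial.X i : MvPolynomial (Fin N) ℚ) ^ (n + 1) *
        bialternant N ⊥ = (∑ i : Fin N, MvPolynomial.X i) *
        ((∑ i : Fin N, MvPolynomial.X i) ^ n * bialternant N ⊥) := by ring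
    rw [h1, ih, Finset.mul_sum]
    have h2 : ∀ μ : {μ : YoungDiagram // μ.card = n ∧ μ.colLen 0 ≤ N},
        (∑ i : Fin N, MvPolynomial.X i) *
          ((sytCount μ.1 : MvPolynomial (Fin N) ℚ) * bialternant N μ.1)
        = (sytCount μ.1 : MvPolynomial (Fin N) ℚ) *
          ∑ ν : {ν : YoungDiagram // ν.card = n + 1 ∧ ν.colLen 0 ≤ N},
            if μ.1 ≤ ν.1 then bialternant N ν.1 else 0 := by
      intro μ
      rw [mul_left_comm, step N μ.1, stepP N n μ.1 μ.2.1 μ.2.2]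
    rw [Finset.sum_congr rfl fun μ _ => h2 μ]
    simp_rw [Finset.mul_sum]
    rw [Finset.sum_comm]
    refine Finset.sum_congr rfl fun ν _ => ?_
    have hcount : ((sytCount ν.1 : ℕ) : MvPolynomial (Fin N) ℚ)
        = ∑ μ : {μ : YoungDiagram // μ.card = n ∧ μ.colLen 0 ≤ N},
            if μ.1 ≤ ν.1 then (sytCount μ.1 : MvPolynomial (Fin N) ℚ) else 0 := by
      rw [count_eq N n ν.1 ν.2.1 ν.2.2, Nat.cast_sum]
      exact Finset.sum_congr rfl fun μ _ => by split <;> simp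
    rw [hcount, Finset.sum_mul]
    refine Finset.sum_congr rfl fun μ _ => ?_
    split <;> ring

end Step

/-- `p_1^n = ∑_{λ ⊢ n} f^λ s_λ`: expressed via the bialternant formula
`s_λ = a_{λ+δ}/a_δ` in `N` variables, i.e. `p_1^n · a_δ = ∑_λ f^λ · a_{λ+δ}`,
the sum being over partitions of `n` with at most `N` parts. -/
theorem stmt5 (N n : ℕ) :
    (∑ i : Fin N, MvPolynomial.X i : MvPolynomial (Fin N) ℚ) ^ n *
        bialternant N ⊥ =
      ∑ᶠ μ : {μ : YoungDiagram // μ.card = n ∧ μ.colLen 0 ≤ N},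
        (sytCount μ.1 : MvPolynomial (Fin N) ℚ) * bialternant N μ.1 := by
  rw [finsum_eq_sum_of_fintype]
  exact main N n
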